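/- arXiv:2003.10550 — 3 statements merged into one kernel-verified Lean document; each statement's English description precedes it below -/
import Mathlib

section
/- Let X be a set, let f, μ, σ : X → ℝ be functions, and let β ≥ 0. Suppose |f(x) − μ(x)| ≤ √β · σ(x) for all x ∈ X, and suppose x_t ∈ X maximizes the upper confidence bound, i.e., μ(x) + √β·σ(x) ≤ μ(x_t) + √β·σ(x_t) for all x ∈ X. Then for every x* ∈ X, the instantaneous regret satisfies f(x*) − f(x_t) ≤ 2·√β·σ(x_t). -/
/-- Lemma 2 (deterministic content): under the confidence event
`|f x − μ x| ≤ √β · σ x` for all `x`, the UCB maximizer `x_t` has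
instantaneous regret at most `2 √β σ(x_t)` against any `x*`. -/
theorem ucb_instantaneous_regret
    {X : Type*} (f μ σ : X → ℝ) (β : ℝ) (hβ : 0 ≤ β)
    (hconf : ∀ x : X, |f x - μ x| ≤ Real.sqrt β * σ x)
    (xt : X)
    (hucb : ∀ x : X, μ x + Real.sqrt β * σ x ≤ μ xt + Real.sqrt β * σ xt)
    (xstar : X) :
    f xstar - f xt ≤ 2 * Real.sqrt β * σ xt := by
  have h1 := abs_le.mp (hconf xstar)
  have h2 := abs_le.mp (hconf xt)
  have h3 := hucb xstar
  linarith [h1.1, h1.2, h2.1, h2.2]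
end

section
/- Let σ > 0, β ≥ 0, let M be a finite index set, and let r, s : M → ℝ satisfy 0 ≤ r(t) ≤ 2·√β·s(t) and 0 ≤ s(t) ≤ 1 for all t ∈ M. Define the information gain I = (1/2)·∑_{t∈M} log(1 + σ^{−2}·s(t)²) and the constant C₁ = 8/log(1 + σ^{−2}). Then ∑_{t∈M} r(t) ≤ √( C₁ · |M| · β · I ). -/
open Real Finset

/-- For `0 ≤ x ≤ 1` and `c > 0`, `x² · log(1+c) ≤ log(1 + c·x²)`. -/
lemma sq_mul_log_le_log_one_add {c x : ℝ} (hc : 0 < c) (hx : 0 ≤ x) (hx1 : x ≤ 1) :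
    x ^ 2 * Real.log (1 + c) ≤ Real.log (1 + c * x ^ 2) := by
  have hp1 : (0:ℝ) ≤ x ^ 2 := sq_nonneg x
  have hp2 : x ^ 2 ≤ 1 := by nlinarith
  have h := rpow_one_add_le_one_add_mul_self (s := c) (by linarith) hp1 hp2
  have h1c : (0:ℝ) < 1 + c := by linarith
  calc x ^ 2 * Real.log (1 + c) = Real.log ((1 + c) ^ (x ^ 2 : ℝ)) := by
        rw [Real.log_rpow h1c]
    _ ≤ Real.log (1 + x ^ 2 * c) := by
        apply Real.log_le_log (Real.rpow_pos_of_pos h1c _) h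
    _ = Real.log (1 + c * x ^ 2) := by ring_nf

/-- Lemma 4 combined with Cauchy–Schwarz (core of Theorem 1(i)): the compressed
regret is bounded by `√(C₁ · |M| · β · I)` where `I` is the information gain. -/
theorem compressed_regret_info_gain_bound
    {ι : Type*} (σ β : ℝ) (hσ : 0 < σ) (hβ : 0 ≤ β)
    (M : Finset ι) (r s : ι → ℝ)
    (hr : ∀ t ∈ M, 0 ≤ r t ∧ r t ≤ 2 * Real.sqrt β * s t)
    (hs : ∀ t ∈ M, 0 ≤ s t ∧ s t ≤ 1) :
    ∑ t ∈ M, r t ≤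
      Real.sqrt ((8 / Real.log (1 + σ⁻¹ ^ 2)) * M.card * β *
        ((1 / 2) * ∑ t ∈ M, Real.log (1 + σ⁻¹ ^ 2 * (s t) ^ 2))) := by
  set c : ℝ := σ⁻¹ ^ 2 with hc
  have hcpos : 0 < c := by positivity
  set L : ℝ := Real.log (1 + c) with hL
  have hLpos : 0 < L := Real.log_pos (by linarith)
  -- step 1: ∑ r ≤ 2√β ∑ s
  have h1 : ∑ t ∈ M, r t ≤ 2 * Real.sqrt β * ∑ t ∈ M, s t := by
    rw [Finset.mul_sum]
    exact Finset.sum_le_sum fun t ht => (hr t ht).2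
  -- step 2: (∑ s)² ≤ card * ∑ s²
  have h2 : (∑ t ∈ M, s t) ^ 2 ≤ (M.card : ℝ) * ∑ t ∈ M, (s t) ^ 2 :=
    sq_sum_le_card_mul_sum_sq
  -- step 3: ∑ s² ≤ (1/L) ∑ log(1 + c s²)
  have h3 : ∑ t ∈ M, (s t) ^ 2 ≤ (1 / L) * ∑ t ∈ M, Real.log (1 + c * (s t) ^ 2) := by
    rw [Finset.mul_sum]
    refine Finset.sum_le_sum fun t ht => ?_
    have := sq_mul_log_le_log_one_add hcpos (hs t ht).1 (hs t ht).2
    rw [one_div_mul_eq_div, le_div_iff₀ hLpos]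
    exact this
  have hsum_s_nonneg : 0 ≤ ∑ t ∈ M, s t := Finset.sum_nonneg fun t ht => (hs t ht).1
  have hsumlog : 0 ≤ ∑ t ∈ M, Real.log (1 + c * (s t) ^ 2) := by
    refine Finset.sum_nonneg fun t ht => Real.log_nonneg ?_
    nlinarith [sq_nonneg (s t), hcpos.le]
  -- combine
  have hmain : (∑ t ∈ M, r t) ^ 2 ≤
      (8 / L) * M.card * β * ((1 / 2) * ∑ t ∈ M, Real.log (1 + c * (s t) ^ 2)) := by
    have hr0 : 0 ≤ ∑ t ∈ M, r t := Finset.sum_nonneg fun t ht => (hr t ht).1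
    have hsq : (∑ t ∈ M, r t) ^ 2 ≤ (2 * Real.sqrt β * ∑ t ∈ M, s t) ^ 2 := by
      apply sq_le_sq' _ h1
      nlinarith
    have hβsq : Real.sqrt β ^ 2 = β := Real.sq_sqrt hβ
    have hchain : (∑ t ∈ M, s t) ^ 2 ≤
        (M.card : ℝ) * ((1 / L) * ∑ t ∈ M, Real.log (1 + c * (s t) ^ 2)) :=
      h2.trans (by
        apply mul_le_mul_of_nonneg_left h3 (by positivity))
    calc (∑ t ∈ M, r t) ^ 2 ≤ (2 * Real.sqrt β * ∑ t ∈ M, s t) ^ 2 := hsq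
      _ = 4 * β * (∑ t ∈ M, s t) ^ 2 := by rw [mul_pow, mul_pow, hβsq]; ring
      _ ≤ 4 * β * ((M.card : ℝ) * ((1 / L) * ∑ t ∈ M, Real.log (1 + c * (s t) ^ 2))) := by
          apply mul_le_mul_of_nonneg_left hchain (by positivity)
      _ = (8 / L) * M.card * β * ((1 / 2) * ∑ t ∈ M, Real.log (1 + c * (s t) ^ 2)) := by
          field_simp; ring
  have hr0 : 0 ≤ ∑ t ∈ M, r t := Finset.sum_nonneg fun t ht => (hr t ht).1
  calc ∑ t ∈ M, r t = Real.sqrt ((∑ t ∈ M, r t) ^ 2) := (Real.sqrt_sq hr0).symm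
    _ ≤ _ := Real.sqrt_le_sqrt hmain
end

section
/- Let φ(z) = (2π)^{−1/2} exp(−z²/2) be the standard Gaussian density, Φ(z) = ∫_{−∞}^z φ(u) du the standard Gaussian distribution function, and τ(z) = z·Φ(z) + φ(z). Let f, μ, ξ ∈ ℝ, σ > 0 and β ≥ 0 satisfy |f − μ| ≤ √β·σ. Then max(f − ξ, 0) − √β·σ ≤ σ·τ( (μ − ξ)/σ ) = σ·φ(z) + (μ − ξ)·Φ(z), where z = (μ − ξ)/σ. -/
open MeasureTheory Real Set Filter

/-- Standard Gaussian density `φ(z) = (2π)^{−1/2} exp(−z²/2)`. -/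
noncomputable def stdGaussianPDF (z : ℝ) : ℝ :=
  (Real.sqrt (2 * Real.pi))⁻¹ * Real.exp (-z ^ 2 / 2)

/-- Standard Gaussian distribution function `Φ(z) = ∫_{−∞}^z φ(u) du`. -/
noncomputable def stdGaussianCDF (z : ℝ) : ℝ :=
  ∫ u in Set.Iic z, stdGaussianPDF u

/-- `τ(z) = z Φ(z) + φ(z)`. -/
noncomputable def tauEI (z : ℝ) : ℝ := z * stdGaussianCDF z + stdGaussianPDF z

lemma stdGaussianPDF_pos (z : ℝ) : 0 < stdGaussianPDF z := by
  unfold stdGaussianPDF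
  positivity

lemma stdGaussianPDF_eq (z : ℝ) :
    stdGaussianPDF z = (Real.sqrt (2 * Real.pi))⁻¹ * Real.exp (-(1/2) * z ^ 2) := by
  unfold stdGaussianPDF; ring_nf

lemma integrable_stdGaussianPDF : Integrable stdGaussianPDF := by
  have := (integrable_exp_neg_mul_sq (by norm_num : (0:ℝ) < 1/2)).const_mul
    (Real.sqrt (2 * Real.pi))⁻¹
  exact this.congr (by filter_upwards with x; rw [stdGaussianPDF_eq])

lemma integrable_mul_stdGaussianPDF : Integrable (fun x => x * stdGaussianPDF x) := by
  have := ((integrable_mul_exp_neg_mul_sq (by norm_num : (0:ℝ) < 1/2)).const_mul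
    (Real.sqrt (2 * Real.pi))⁻¹)
  exact this.congr (by filter_upwards with x; rw [stdGaussianPDF_eq]; ring)

lemma hasDerivAt_neg_stdGaussianPDF (u : ℝ) :
    HasDerivAt (fun x => -stdGaussianPDF x) (u * stdGaussianPDF u) u := by
  have h1 : HasDerivAt (fun x : ℝ => -x ^ 2 / 2) (-u) u := by
    have h0 : HasDerivAt (fun x : ℝ => x ^ 2) (2 * u) u := by
      simpa using hasDerivAt_pow 2 u
    have : HasDerivAt (fun x : ℝ => -x ^ 2 / 2) (-(2 * u) / 2) u := h0.neg.div_const 2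
    convert this using 1
    ring
  have h2 : HasDerivAt (fun x : ℝ => Real.exp (-x ^ 2 / 2))
      (Real.exp (-u ^ 2 / 2) * (-u)) u := h1.exp
  have h3 := (h2.const_mul (Real.sqrt (2 * Real.pi))⁻¹).neg
  have : u * stdGaussianPDF u
      = -((Real.sqrt (2 * Real.pi))⁻¹ * (Real.exp (-u ^ 2 / 2) * (-u))) := by
    unfold stdGaussianPDF; ring
  rw [this]
  exact h3

lemma tendsto_stdGaussianPDF_of_sq (l : Filter ℝ)
    (h : Tendsto (fun x : ℝ => x ^ 2) l atTop) : Tendsto stdGaussianPDF l (nhds 0) := by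
  have h2 : Tendsto (fun x : ℝ => -x ^ 2 / 2) l atBot := by
    apply Tendsto.atBot_div_const (by norm_num : (0:ℝ) < 2)
    exact tendsto_neg_atBot_iff.mpr h
  have h3 : Tendsto (fun x : ℝ => Real.exp (-x ^ 2 / 2)) l (nhds 0) :=
    Real.tendsto_exp_atBot.comp h2
  have h4 := h3.const_mul (Real.sqrt (2 * Real.pi))⁻¹
  rw [mul_zero] at h4
  exact h4.congr fun x => by rw [stdGaussianPDF]

lemma tendsto_stdGaussianPDF_atBot : Tendsto stdGaussianPDF atBot (nhds 0) := by
  apply tendsto_stdGaussianPDF_of_sq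
  have h1 : Tendsto (fun x : ℝ => (-x) ^ 2) atBot atTop :=
    (tendsto_pow_atTop two_ne_zero).comp tendsto_neg_atBot_atTop
  exact h1.congr fun x => by ring

lemma tendsto_stdGaussianPDF_atTop : Tendsto stdGaussianPDF atTop (nhds 0) :=
  tendsto_stdGaussianPDF_of_sq _ (tendsto_pow_atTop two_ne_zero)

lemma integral_Iic_mul_stdGaussianPDF (z : ℝ) :
    ∫ u in Set.Iic z, u * stdGaussianPDF u = -stdGaussianPDF z := by
  have := integral_Iic_of_hasDerivAt_of_tendsto'
    (f := fun x => -stdGaussianPDF x) (f' := fun u => u * stdGaussianPDF u) (a := z) (m := 0)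
    (fun x _ => hasDerivAt_neg_stdGaussianPDF x)
    integrable_mul_stdGaussianPDF.integrableOn
    (by simpa using tendsto_stdGaussianPDF_atBot.neg)
  simpa using this

lemma integral_Ioi_mul_stdGaussianPDF (z : ℝ) :
    ∫ u in Set.Ioi z, u * stdGaussianPDF u = stdGaussianPDF z := by
  have := integral_Ioi_of_hasDerivAt_of_tendsto'
    (f := fun x => -stdGaussianPDF x) (f' := fun u => u * stdGaussianPDF u) (a := z) (m := 0)
    (fun x _ => hasDerivAt_neg_stdGaussianPDF x)
    integrable_mul_stdGaussianPDF.integrableOn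
    (by simpa using tendsto_stdGaussianPDF_atTop.neg)
  simpa using this

lemma integral_stdGaussianPDF : ∫ u, stdGaussianPDF u = 1 := by
  have h : ∫ u : ℝ, Real.exp (-(1/2) * u ^ 2) = Real.sqrt (Real.pi / (1/2)) :=
    integral_gaussian (1/2)
  have hc : Real.sqrt (Real.pi / (1/2)) = Real.sqrt (2 * Real.pi) := by
    congr 1; ring
  calc ∫ u, stdGaussianPDF u
      = ∫ u, (Real.sqrt (2 * Real.pi))⁻¹ * Real.exp (-(1/2) * u ^ 2) := by
        congr 1; ext u; rw [stdGaussianPDF_eq]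
    _ = (Real.sqrt (2 * Real.pi))⁻¹ * Real.sqrt (2 * Real.pi) := by
        rw [integral_const_mul, h, hc]
    _ = 1 := by
        rw [inv_mul_cancel₀]
        positivity

lemma stdGaussianCDF_nonneg (z : ℝ) : 0 ≤ stdGaussianCDF z :=
  setIntegral_nonneg measurableSet_Iic fun x _ => (stdGaussianPDF_pos x).le

lemma stdGaussianCDF_le_one (z : ℝ) : stdGaussianCDF z ≤ 1 := by
  rw [← integral_stdGaussianPDF]
  exact setIntegral_le_integral integrable_stdGaussianPDF
    (Filter.Eventually.of_forall fun x => (stdGaussianPDF_pos x).le)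

lemma integral_Ioi_stdGaussianPDF (z : ℝ) :
    ∫ u in Set.Ioi z, stdGaussianPDF u = 1 - stdGaussianCDF z := by
  have h := integral_add_compl (measurableSet_Iic (a := z)) integrable_stdGaussianPDF
  rw [compl_Iic] at h
  rw [integral_stdGaussianPDF] at h
  unfold stdGaussianCDF
  linarith

lemma tauEI_nonneg (z : ℝ) : 0 ≤ tauEI z := by
  unfold tauEI
  rcases le_or_gt 0 z with hz | hz
  · have := stdGaussianCDF_nonneg z
    have := (stdGaussianPDF_pos z).le
    nlinarith
  · -- Mills: Φ(z) ≤ -φ(z)/z for z < 0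
    have hmono : stdGaussianCDF z ≤ ∫ u in Set.Iic z, (u / z) * stdGaussianPDF u := by
      unfold stdGaussianCDF
      apply setIntegral_mono_on integrable_stdGaussianPDF.integrableOn
      · exact ((integrable_mul_stdGaussianPDF.div_const z).congr
          (by filter_upwards with x; ring)).integrableOn
      · exact measurableSet_Iic
      · intro x hx
        have h1 : (1 : ℝ) ≤ x / z := by
          rw [le_div_iff_of_neg hz]
          simpa using hx
        nlinarith [stdGaussianPDF_pos x, (stdGaussianPDF_pos x).le]
    have heq : ∫ u in Set.Iic z, (u / z) * stdGaussianPDF u = -stdGaussianPDF z / z := by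
      have : ∫ u in Set.Iic z, (u / z) * stdGaussianPDF u
          = (∫ u in Set.Iic z, u * stdGaussianPDF u) / z := by
        rw [← integral_div]
        congr 1; ext u; ring
      rw [this, integral_Iic_mul_stdGaussianPDF]
    rw [heq] at hmono
    have h5 : z * stdGaussianCDF z ≥ z * (-stdGaussianPDF z / z) :=
      mul_le_mul_of_nonpos_left hmono hz.le
    have h6 : z * (-stdGaussianPDF z / z) = -stdGaussianPDF z := by
      rw [mul_div_assoc', mul_div_cancel_left₀ _ hz.ne]
    linarith

lemma le_tauEI (z : ℝ) : z ≤ tauEI z := by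
  unfold tauEI
  rcases le_or_gt z 0 with hz | hz
  · have h1 := stdGaussianCDF_le_one z
    have h2 := (stdGaussianPDF_pos z).le
    nlinarith
  · -- Mills: z (1 - Φ(z)) ≤ φ(z) for z > 0
    have hmono : ∫ u in Set.Ioi z, z * stdGaussianPDF u
        ≤ ∫ u in Set.Ioi z, u * stdGaussianPDF u := by
      apply setIntegral_mono_on (integrable_stdGaussianPDF.const_mul z).integrableOn
        integrable_mul_stdGaussianPDF.integrableOn measurableSet_Ioi
      intro x hx
      have : z ≤ x := (le_of_lt hx)
      nlinarith [stdGaussianPDF_pos x]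
    rw [integral_Ioi_mul_stdGaussianPDF, integral_const_mul, integral_Ioi_stdGaussianPDF]
      at hmono
    nlinarith

/-- Lemma 7 (deterministic content): on the confidence event `|f − μ| ≤ √β σ`,
the instantaneous improvement `max(f − ξ, 0)` minus `√β σ` is bounded above by
the expected improvement `σ τ((μ − ξ)/σ) = σ φ(z) + (μ − ξ) Φ(z)`. -/
theorem instantaneous_improvement_le_expected_improvement
    (f μ ξ σ β : ℝ) (hσ : 0 < σ) (hβ : 0 ≤ β)
    (hconf : |f - μ| ≤ Real.sqrt β * σ) :
    max (f - ξ) 0 - Real.sqrt β * σ ≤ σ * tauEI ((μ - ξ) / σ) ∧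
    σ * tauEI ((μ - ξ) / σ) =
      σ * stdGaussianPDF ((μ - ξ) / σ) + (μ - ξ) * stdGaussianCDF ((μ - ξ) / σ) := by
  set z := (μ - ξ) / σ with hzdef
  have hσz : σ * z = μ - ξ := by rw [hzdef]; exact mul_div_cancel₀ _ hσ.ne'
  constructor
  · have hb : 0 ≤ Real.sqrt β * σ := mul_nonneg (Real.sqrt_nonneg β) hσ.le
    have habs : f - μ ≤ Real.sqrt β * σ := (abs_le.mp hconf).2
    have h0 : 0 ≤ σ * tauEI z := mul_nonneg hσ.le (tauEI_nonneg z)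
    have h1 : σ * z ≤ σ * tauEI z := mul_le_mul_of_nonneg_left (le_tauEI z) hσ.le
    rcases max_cases (f - ξ) 0 with ⟨heq, hle⟩ | ⟨heq, hlt⟩
    · rw [heq]; nlinarith
    · rw [heq]; linarith
  · unfold tauEI
    rw [mul_add, ← mul_assoc, hσz]
    ring
end
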